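/- (Trace inequality for IFE functions, Lemma 5.2.) For every ϱ > 0 and β^+, β^- > 0 there exists a constant C, depending only on β^+, β^-, and ϱ, such that for every ϱ-shape-regular simplex T ⊂ ℝ^N (N ∈ {2,3}), every cutting hyperplane H for which T_h^+ and T_h^- have positive measure, and every φ ∈ S_h(T): ∫_{∂T} |∇_h φ|² dH^{N−1} ≤ C² h_T^{-1} ∫_T |∇_h φ|² dx, where ∇_h φ denotes the piecewise constant broken gradient equal to ∇φ^± on T_h^± (defined H^{N−1}-almost everywhere on ∂T). -/

import Mathlib

open MeasureTheory Metric Set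
open scoped RealInnerProductSpace

noncomputable section

/-- Euclidean space `ℝ^N`. -/
abbrev Euc (N : ℕ) := EuclideanSpace ℝ (Fin N)

/-- Evaluation of the affine function with gradient `p.1` and constant `p.2`. -/
noncomputable def affEval {N : ℕ} (p : Euc N × ℝ) (x : Euc N) : ℝ := ⟪p.1, x⟫ + p.2

namespace Statement11Aux

/-- Volume of the unit Euclidean ball in dimension `n`. -/
def sigma (n : ℕ) : ℝ := Real.sqrt Real.pi ^ n / Real.Gamma (n / 2 + 1)

lemma sigma_pos (n : ℕ) : 0 < sigma n := by
  have h1 : 0 < Real.Gamma ((n : ℝ) / 2 + 1) := Real.Gamma_pos_of_pos (by positivity)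
  have h2 : 0 < Real.sqrt Real.pi := Real.sqrt_pos.mpr Real.pi_pos
  exact div_pos (pow_pos h2 n) h1

/-- The Hausdorff measure of the boundary of a simplex. -/
lemma frontier_bound (M : ℕ) (v : Fin (M + 3) → Euc (M + 2)) (hv : AffineIndependent ℝ v) :
    μH[((M + 1 : ℕ) : ℝ)] (frontier (convexHull ℝ (Set.range v)))
      ≤ ENNReal.ofReal ((M + 3 : ℝ) *
          ((M + 1 : ℝ) * Metric.diam (convexHull ℝ (Set.range v))) ^ (M + 1)) := by
  set T := convexHull ℝ (Set.range v) with hT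
  have hfin : (Set.range v).Finite := Set.finite_range v
  have hcomp : IsCompact T := hfin.isCompact_convexHull ℝ
  have hbd : Bornology.IsBounded T := hcomp.isBounded
  have h0 : (0 : ℝ) ≤ Metric.diam T := Metric.diam_nonneg
  have hd : ∀ i j, ‖v i - v j‖ ≤ Metric.diam T := by
    intro i j
    rw [← dist_eq_norm]
    exact Metric.dist_le_diam_of_mem hbd (subset_convexHull ℝ _ ⟨i, rfl⟩)
      (subset_convexHull ℝ _ ⟨j, rfl⟩)
  have htot : affineSpan ℝ (Set.range v) = ⊤ := by
    rw [hv.affineSpan_eq_top_iff_card_eq_finrank_add_one]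
    simp [finrank_euclideanSpace]
  let b : AffineBasis (Fin (M + 3)) ℝ (Euc (M + 2)) := ⟨v, hv, htot⟩
  have hbv : ⇑b = v := rfl
  set f : Fin (M + 3) → (Fin (M + 1) → ℝ) → Euc (M + 2) := fun j t =>
    v (j.succAbove 0) + ∑ i : Fin (M + 1), t i • (v (j.succAbove i.succ) - v (j.succAbove 0))
    with hf
  have hsub : frontier T ⊆ ⋃ j, f j '' (Set.Icc 0 1) := by
    intro x hx
    have hxT : x ∈ T := by
      have := frontier_subset_closure hx
      rwa [hcomp.isClosed.closure_eq] at this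
    have hnn : ∀ i, 0 ≤ b.coord i x := by
      have h1 := b.convexHull_eq_nonneg_coord
      rw [hbv] at h1
      rw [hT, h1] at hxT
      exact hxT
    have hnotint : x ∉ interior T := hx.2
    obtain ⟨j, hj⟩ : ∃ j, b.coord j x ≤ 0 := by
      by_contra hcon
      push_neg at hcon
      apply hnotint
      rw [hT, ← hbv, b.interior_convexHull]
      exact fun i => hcon i
    have hj0 : b.coord j x = 0 := le_antisymm hj (hnn j)
    have hsum : ∑ i, b.coord i x = 1 := b.sum_coord_apply_eq_one x
    have hcomb : Finset.univ.affineCombination ℝ v (fun i => b.coord i x) = x :=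
      b.affineCombination_coord_eq_self x
    set c : Fin (M + 3) → ℝ := fun i => b.coord i x with hc
    have hxeq : x = v (j.succAbove 0) +
        ∑ i : Fin (M + 2), c (j.succAbove i) • (v (j.succAbove i) - v (j.succAbove 0)) := by
      have h1 := Finset.univ.affineCombination_eq_weightedVSubOfPoint_vadd_of_sum_eq_one
        (fun i => c i) v hsum (v (j.succAbove 0))
      calc x = (∑ i, c i • (v i -ᵥ v (j.succAbove 0))) +ᵥ v (j.succAbove 0) := by
              rw [← hcomb, h1, Finset.weightedVSubOfPoint_apply]
        _ = v (j.succAbove 0) +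
              ∑ i : Fin (M + 2), c (j.succAbove i) • (v (j.succAbove i) - v (j.succAbove 0)) := by
            have hcj : c j = 0 := hj0
            rw [Fin.sum_univ_succAbove (fun i => c i • (v i -ᵥ v (j.succAbove 0))) j, hcj]
            simp [vsub_eq_sub, vadd_eq_add, add_comm]
    refine Set.mem_iUnion.2 ⟨j, ⟨fun i => c (j.succAbove i.succ), ?_, ?_⟩⟩
    · refine Set.mem_Icc.2 ⟨?_, ?_⟩
      · intro i; exact hnn _
      · intro i
        calc c (j.succAbove i.succ) ≤ ∑ k, c k :=
              Finset.single_le_sum (fun k _ => hnn k) (Finset.mem_univ _)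
          _ = 1 := hsum
    · show f j _ = x
      rw [hf, hxeq]
      rw [Fin.sum_univ_succ
        (fun i : Fin (M + 2) => c (j.succAbove i) • (v (j.succAbove i) - v (j.succAbove 0)))]
      simp
  have hface : ∀ j, μH[((M + 1 : ℕ) : ℝ)] (f j '' (Set.Icc 0 1))
      ≤ ENNReal.ofReal (((M + 1 : ℝ) * Metric.diam T) ^ (M + 1)) := by
    intro j
    have hlip : LipschitzWith (Real.toNNReal ((M + 1 : ℝ) * Metric.diam T)) (f j) := by
      apply LipschitzWith.of_dist_le_mul
      intro t s
      rw [dist_eq_norm]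
      have hfts : f j t - f j s =
          ∑ i : Fin (M + 1), (t i - s i) • (v (j.succAbove i.succ) - v (j.succAbove 0)) := by
        simp only [hf]
        rw [add_sub_add_left_eq_sub, ← Finset.sum_sub_distrib]
        congr 1; funext i; rw [← sub_smul]
      rw [hfts]
      calc ‖∑ i : Fin (M + 1), (t i - s i) • (v (j.succAbove i.succ) - v (j.succAbove 0))‖
          ≤ ∑ i : Fin (M + 1), ‖(t i - s i) • (v (j.succAbove i.succ) - v (j.succAbove 0))‖ :=
            norm_sum_le _ _
        _ ≤ ∑ _i : Fin (M + 1), dist t s * Metric.diam T := by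
            apply Finset.sum_le_sum
            intro i _
            rw [norm_smul, Real.norm_eq_abs]
            have h1 : |t i - s i| ≤ dist t s := by
              rw [← Real.dist_eq]
              exact dist_le_pi_dist t s i
            exact mul_le_mul h1 (hd _ _) (norm_nonneg _) dist_nonneg
        _ = (Real.toNNReal ((M + 1 : ℝ) * Metric.diam T)) * dist t s := by
            rw [Finset.sum_const, Finset.card_univ, Fintype.card_fin]
            rw [Real.coe_toNNReal _ (by positivity)]
            push_cast
            ring
    have h2 := hlip.hausdorffMeasure_image_le (d := ((M + 1 : ℕ) : ℝ)) (by positivity)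
      (Set.Icc 0 1)
    refine le_trans h2 ?_
    have hμIcc : μH[((M + 1 : ℕ) : ℝ)] (Set.Icc (0 : Fin (M + 1) → ℝ) 1) = 1 := by
      have hcard : ((M + 1 : ℕ) : ℝ) = ((Fintype.card (Fin (M + 1)) : ℕ) : ℝ) := by simp
      rw [hcard, hausdorffMeasure_pi_real, Real.volume_Icc_pi]
      simp
    rw [hμIcc, mul_one, ENNReal.rpow_natCast]
    apply le_of_eq
    rw [ENNReal.ofReal_pow (by positivity)]
    rfl
  calc μH[((M + 1 : ℕ) : ℝ)] (frontier T) ≤ μH[((M + 1 : ℕ) : ℝ)] (⋃ j, f j '' (Set.Icc 0 1)) :=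
        measure_mono hsub
    _ ≤ ∑' j, μH[((M + 1 : ℕ) : ℝ)] (f j '' (Set.Icc 0 1)) := measure_iUnion_le _
    _ = ∑ j, μH[((M + 1 : ℕ) : ℝ)] (f j '' (Set.Icc 0 1)) := tsum_fintype _
    _ ≤ ∑ _j : Fin (M + 3), ENNReal.ofReal (((M + 1 : ℝ) * Metric.diam T) ^ (M + 1)) :=
        Finset.sum_le_sum fun j _ => hface j
    _ = ENNReal.ofReal ((M + 3 : ℝ) * ((M + 1 : ℝ) * Metric.diam T) ^ (M + 1)) := by
        rw [Finset.sum_const, Finset.card_univ, Fintype.card_fin]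
        rw [ENNReal.ofReal_mul (by positivity)]
        rw [nsmul_eq_mul]
        congr 1
        rw [← ENNReal.ofReal_natCast]
        congr 1
        push_cast
        ring

/-- comparability of the two gradients -/
lemma grad_compare {N : ℕ} (βp βm K : ℝ) (hβp : 0 < βp) (hβm : 0 < βm)
    (hKp : (βm / βp) ^ 2 ≤ K) (hKm : (βp / βm) ^ 2 ≤ K) (hK1 : 1 ≤ K)
    (nv x₀ : Euc N) (hnv : ‖nv‖ = 1) (p m : Euc N × ℝ)
    (hcont : ∀ x, ⟪x - x₀, nv⟫ = 0 → affEval p x = affEval m x)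
    (hflux : βp * ⟪p.1, nv⟫ = βm * ⟪m.1, nv⟫) :
    ‖p.1‖ ^ 2 ≤ K * ‖m.1‖ ^ 2 ∧ ‖m.1‖ ^ 2 ≤ K * ‖p.1‖ ^ 2 := by
  have hnn : ⟪nv, nv⟫ = 1 := by
    rw [real_inner_self_eq_norm_mul_norm, hnv]; ring
  have hperp : ∀ w : Euc N, ⟪w, nv⟫ = 0 → ⟪p.1 - m.1, w⟫ = 0 := by
    intro w hw
    have h1 : affEval p (x₀ + w) = affEval m (x₀ + w) := hcont (x₀ + w) (by simpa using hw)
    have h0 : affEval p x₀ = affEval m x₀ := hcont x₀ (by simp)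
    simp only [affEval, inner_add_right] at h1 h0
    rw [inner_sub_left]
    linarith
  set a := ⟪p.1, nv⟫ with ha0
  set bb := ⟪m.1, nv⟫ with hbb0
  have hdnv : p.1 - m.1 = (a - bb) • nv := by
    have h1 : ⟪p.1 - m.1, nv⟫ = a - bb := by rw [inner_sub_left]
    have hw0 : ⟪p.1 - m.1 - (a - bb) • nv, nv⟫ = 0 := by
      rw [inner_sub_left, real_inner_smul_left, hnn, h1]; ring
    have h2 : ⟪p.1 - m.1, p.1 - m.1 - (a - bb) • nv⟫ = 0 := hperp _ hw0
    have h3 : ⟪(a - bb) • nv, p.1 - m.1 - (a - bb) • nv⟫ = 0 := by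
      rw [real_inner_smul_left, real_inner_comm, hw0, mul_zero]
    have h4 : ⟪p.1 - m.1 - (a - bb) • nv, p.1 - m.1 - (a - bb) • nv⟫ = 0 := by
      rw [inner_sub_left, h2, h3]; ring
    have h5 : p.1 - m.1 - (a - bb) • nv = 0 := inner_self_eq_zero.mp h4
    have := sub_eq_zero.mp h5
    exact this
  set u := p.1 - a • nv with hu1
  have hum : u = m.1 - bb • nv := by
    rw [hu1]
    have : p.1 = m.1 + (a - bb) • nv := by
      rw [← hdnv]; abel
    rw [this, sub_smul]
    abel
  have hup : ⟪u, nv⟫ = 0 := by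
    rw [hu1, inner_sub_left, real_inner_smul_left, hnn, ← ha0]; ring
  have hP : ‖p.1‖ ^ 2 = ‖u‖ ^ 2 + a ^ 2 := by
    have hpu : p.1 = u + a • nv := by rw [hu1]; abel
    rw [hpu, norm_add_sq_real, real_inner_smul_right, hup, norm_smul, Real.norm_eq_abs, hnv]
    simp [sq_abs]
  have hQ : ‖m.1‖ ^ 2 = ‖u‖ ^ 2 + bb ^ 2 := by
    have hmu : m.1 = u + bb • nv := by rw [hum]; abel
    rw [hmu, norm_add_sq_real, real_inner_smul_right, hup, norm_smul, Real.norm_eq_abs, hnv]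
    simp [sq_abs]
  have ha : a = (βm / βp) * bb := by
    field_simp
    linarith
  have hb : bb = (βp / βm) * a := by
    field_simp
    linarith
  have hu2 : (0 : ℝ) ≤ ‖u‖ ^ 2 := sq_nonneg _
  constructor
  · rw [hP, hQ, ha]
    nlinarith [sq_nonneg bb, sq_nonneg (βm / βp)]
  · rw [hP, hQ, hb]
    nlinarith [sq_nonneg a, sq_nonneg (βp / βm)]

/-- The core of the trace inequality, for `N = M + 2`. -/
lemma key (M : ℕ) (ϱ βp βm K C : ℝ) (hϱ : 0 < ϱ) (hβp : 0 < βp) (hβm : 0 < βm)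
    (hK1 : 1 ≤ K) (hKp : (βm / βp) ^ 2 ≤ K) (hKm : (βp / βm) ^ 2 ≤ K)
    (hC : K * ϱ ^ (M + 2) * ((M + 3 : ℝ) * (M + 1 : ℝ) ^ (M + 1)) / sigma (M + 2) ≤ C ^ 2)
    (v : Fin (M + 2 + 1) → Euc (M + 2)) (hv : AffineIndependent ℝ v)
    (Tset : Set (Euc (M + 2))) (hTs : Tset = convexHull ℝ (Set.range v))
    (hreg : ∃ z r, 0 < r ∧ closedBall z r ⊆ Tset ∧ Metric.diam Tset ≤ ϱ * r)
    (nv x₀ : Euc (M + 2)) (hnv : ‖nv‖ = 1)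
    (p m : Euc (M + 2) × ℝ)
    (hcont : ∀ x, ⟪x - x₀, nv⟫ = 0 → affEval p x = affEval m x)
    (hflux : βp * ⟪p.1, nv⟫ = βm * ⟪m.1, nv⟫) :
    (∫ x in frontier Tset, ‖if 0 < ⟪x - x₀, nv⟫ then p.1 else m.1‖ ^ 2
        ∂(μH[((M + 2 : ℕ) : ℝ) - 1])) ≤
      C ^ 2 / Metric.diam Tset *
        ∫ x in Tset, ‖if 0 < ⟪x - x₀, nv⟫ then p.1 else m.1‖ ^ 2 := by
  have hN1 : ((M + 2 : ℕ) : ℝ) - 1 = ((M + 1 : ℕ) : ℝ) := by push_cast; ring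
  rw [hN1]
  obtain ⟨z, r, hr, hball, hreg2⟩ := hreg
  subst hTs
  set T := convexHull ℝ (Set.range v) with hT
  have hfin : (Set.range v).Finite := Set.finite_range v
  have hcomp : IsCompact T := hfin.isCompact_convexHull ℝ
  have hbd : Bornology.IsBounded T := hcomp.isBounded
  have hdiam0 : (0 : ℝ) ≤ Metric.diam T := Metric.diam_nonneg
  -- diam is positive
  have hrh : r ≤ Metric.diam T := by
    have h1 : z ∈ closedBall z r := mem_closedBall_self hr.le
    have h2 : z + r • (EuclideanSpace.single 0 1 : Euc (M + 2)) ∈ closedBall z r := by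
      rw [mem_closedBall, dist_eq_norm]
      simp [norm_smul, abs_of_nonneg hr.le]
    have h3 := Metric.dist_le_diam_of_mem hbd (hball h2) (hball h1)
    rw [dist_eq_norm] at h3
    simpa [norm_smul, abs_of_nonneg hr.le] using h3
  have hh : 0 < Metric.diam T := lt_of_lt_of_le hr hrh
  -- gradient comparison
  obtain ⟨hPQ, hQP⟩ := grad_compare βp βm K hβp hβm hKp hKm hK1 nv x₀ hnv p m hcont hflux
  set P := ‖p.1‖ ^ 2 with hPdef
  set Q := ‖m.1‖ ^ 2 with hQdef
  have hP0 : 0 ≤ P := sq_nonneg _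
  have hQ0 : 0 ≤ Q := sq_nonneg _
  have hK0 : 0 < K := lt_of_lt_of_le one_pos hK1
  set g : Euc (M + 2) → ℝ := fun x => ‖if 0 < ⟪x - x₀, nv⟫ then p.1 else m.1‖ ^ 2 with hgdef
  have hgub : ∀ x : Euc (M + 2), g x ≤ max P Q := by
    intro x
    rw [hgdef]
    by_cases hx : 0 < ⟪x - x₀, nv⟫
    · simp only [hx, if_true]; exact le_max_left _ _
    · simp only [hx, if_false]; exact le_max_right _ _
  have hglb : ∀ x : Euc (M + 2), min P Q ≤ g x := by
    intro x
    rw [hgdef]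
    by_cases hx : 0 < ⟪x - x₀, nv⟫
    · simp only [hx, if_true]; exact min_le_left _ _
    · simp only [hx, if_false]; exact min_le_right _ _
  have hg0 : ∀ x : Euc (M + 2), 0 ≤ g x := fun x => sq_nonneg _
  have hSmeas : MeasurableSet {x : Euc (M + 2) | 0 < ⟪x - x₀, nv⟫} := by
    have hco : Continuous fun x : Euc (M + 2) => ⟪x - x₀, nv⟫ :=
      (continuous_id.sub continuous_const).inner continuous_const
    exact (isOpen_lt continuous_const hco).measurableSet
  have hgmeas : Measurable g := by
    have h1 : Measurable fun x : Euc (M + 2) => if 0 < ⟪x - x₀, nv⟫ then p.1 else m.1 :=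
      Measurable.ite hSmeas measurable_const measurable_const
    exact h1.norm.pow_const 2
  -- frontier bound
  set B := (M + 3 : ℝ) * ((M + 1 : ℝ) * Metric.diam T) ^ (M + 1) with hBdef
  have hB0 : 0 ≤ B := by positivity
  have hμF : μH[((M + 1 : ℕ) : ℝ)] (frontier T) ≤ ENNReal.ofReal B := frontier_bound M v hv
  have hμFlt : μH[((M + 1 : ℕ) : ℝ)] (frontier T) < ⊤ :=
    lt_of_le_of_lt hμF ENNReal.ofReal_lt_top
  have hLHS : (∫ x in frontier T, g x ∂(μH[((M + 1 : ℕ) : ℝ)])) ≤ max P Q * B := by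
    have h1 : ‖∫ x in frontier T, g x ∂(μH[((M + 1 : ℕ) : ℝ)])‖
        ≤ max P Q * (μH[((M + 1 : ℕ) : ℝ)] (frontier T)).toReal := by
      apply norm_setIntegral_le_of_norm_le_const hμFlt
      · intro x _
        rw [Real.norm_eq_abs, abs_of_nonneg (hg0 x)]
        exact hgub x
    have h2 : (μH[((M + 1 : ℕ) : ℝ)] (frontier T)).toReal ≤ B :=
      ENNReal.toReal_le_of_le_ofReal hB0 hμF
    calc (∫ x in frontier T, g x ∂(μH[((M + 1 : ℕ) : ℝ)]))
        ≤ ‖∫ x in frontier T, g x ∂(μH[((M + 1 : ℕ) : ℝ)])‖ := le_abs_self _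
      _ ≤ max P Q * (μH[((M + 1 : ℕ) : ℝ)] (frontier T)).toReal := h1
      _ ≤ max P Q * B := by
          apply mul_le_mul_of_nonneg_left h2
          exact le_max_of_le_left hP0
  -- volume lower bound
  have hTm : MeasurableSet T := hcomp.isClosed.measurableSet
  have hTfin : volume T ≠ ⊤ := hcomp.measure_lt_top.ne
  have hIntg : IntegrableOn g T volume := by
    apply Measure.integrableOn_of_bounded hTfin hgmeas.aestronglyMeasurable
      (M := max P Q)
    apply ae_of_all
    intro x
    rw [Real.norm_eq_abs, abs_of_nonneg (hg0 x)]
    exact hgub x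
  have hRHS : min P Q * (volume T).toReal ≤ ∫ x in T, g x :=
    setIntegral_ge_of_const_le_real hTm hTfin (fun x _ => hglb x) hIntg
  have hballvol : ENNReal.ofReal (r ^ (M + 2) * sigma (M + 2)) ≤ volume T := by
    have h1 : volume (closedBall z r) = ENNReal.ofReal (r ^ (M + 2) * sigma (M + 2)) := by
      rw [EuclideanSpace.volume_closedBall (Fin (M + 2)) z r]
      rw [ENNReal.ofReal_mul (by positivity), ← ENNReal.ofReal_pow hr.le]
      congr 2
      · simp
      · simp [sigma]
    rw [← h1]
    exact measure_mono hball
  have hvolT : r ^ (M + 2) * sigma (M + 2) ≤ (volume T).toReal :=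
    (ENNReal.ofReal_le_iff_le_toReal hTfin).mp hballvol
  have hIge : min P Q * (r ^ (M + 2) * sigma (M + 2)) ≤ ∫ x in T, g x := by
    refine le_trans ?_ hRHS
    apply mul_le_mul_of_nonneg_left hvolT
    exact le_min hP0 hQ0
  -- final arithmetic
  rw [div_mul_eq_mul_div, le_div_iff₀ hh]
  set h := Metric.diam T
  set σ := sigma (M + 2) with hσdef
  have hσ : 0 < σ := sigma_pos _
  have hmaxmin : max P Q ≤ K * min P Q := by
    rcases le_total P Q with hle | hle
    · rw [max_eq_right hle, min_eq_left hle]; exact hQP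
    · rw [max_eq_left hle, min_eq_right hle]; exact hPQ
  set a0 : ℝ := (M + 3 : ℝ) * (M + 1 : ℝ) ^ (M + 1) with ha0def
  have ha00 : 0 ≤ a0 := by positivity
  have hBh : B * h = a0 * h ^ (M + 2) := by
    rw [hBdef, ha0def, mul_pow]
    ring
  have hs3 : h ^ (M + 2) ≤ ϱ ^ (M + 2) * r ^ (M + 2) := by
    rw [← mul_pow]
    exact pow_le_pow_left₀ hdiam0 hreg2 _
  have hs4 : K * ϱ ^ (M + 2) * a0 ≤ C ^ 2 * σ := by
    rw [div_le_iff₀ hσ] at hC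
    calc K * ϱ ^ (M + 2) * a0 = K * ϱ ^ (M + 2) * ((M + 3 : ℝ) * (M + 1 : ℝ) ^ (M + 1)) := by
          rw [ha0def]
      _ ≤ C ^ 2 * σ := hC
  have hmain : (max P Q * B) * h ≤ C ^ 2 * (min P Q * (r ^ (M + 2) * σ)) := by
    have hminr : 0 ≤ min P Q * r ^ (M + 2) := by
      apply mul_nonneg (le_min hP0 hQ0)
      positivity
    calc (max P Q * B) * h = max P Q * (a0 * h ^ (M + 2)) := by
          rw [mul_assoc, hBh]
      _ ≤ (K * min P Q) * (a0 * h ^ (M + 2)) := by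
          apply mul_le_mul_of_nonneg_right hmaxmin
          positivity
      _ ≤ (K * min P Q) * (a0 * (ϱ ^ (M + 2) * r ^ (M + 2))) := by
          apply mul_le_mul_of_nonneg_left _ (by positivity)
          exact mul_le_mul_of_nonneg_left hs3 ha00
      _ = (min P Q * r ^ (M + 2)) * (K * ϱ ^ (M + 2) * a0) := by ring
      _ ≤ (min P Q * r ^ (M + 2)) * (C ^ 2 * σ) := mul_le_mul_of_nonneg_left hs4 hminr
      _ = C ^ 2 * (min P Q * (r ^ (M + 2) * σ)) := by ring
  calc (∫ x in frontier T, g x ∂(μH[((M + 1 : ℕ) : ℝ)])) * h ≤ (max P Q * B) * h :=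
        mul_le_mul_of_nonneg_right hLHS hh.le
    _ ≤ C ^ 2 * (min P Q * (r ^ (M + 2) * σ)) := hmain
    _ ≤ C ^ 2 * ∫ x in T, g x := mul_le_mul_of_nonneg_left hIge (sq_nonneg C)

end Statement11Aux

/-- Lemma 5.2 (trace inequality for IFE functions):
`‖∇_h φ‖_{L²(∂T)} ≤ C h_T^{-1/2} ‖∇_h φ‖_{L²(T)}` with `C = C(β⁺, β⁻, ϱ)`,
stated in the squared form
`∫_{∂T} |∇_h φ|² dH^{N-1} ≤ C² h_T⁻¹ ∫_T |∇_h φ|² dx`. -/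
theorem statement11
    (ϱ βp βm : ℝ) (hϱ : 0 < ϱ) (hβp : 0 < βp) (hβm : 0 < βm) :
    ∃ C : ℝ, 0 < C ∧
      ∀ (N : ℕ), (N = 2 ∨ N = 3) →
      ∀ (v : Fin (N + 1) → Euc N), AffineIndependent ℝ v →
      ∀ (Tset : Set (Euc N)), Tset = convexHull ℝ (Set.range v) →
      -- shape regularity: h_T ≤ ϱ r_T
      (∃ z r, 0 < r ∧ closedBall z r ⊆ Tset ∧ Metric.diam Tset ≤ ϱ * r) →
      ∀ (nv x₀ : Euc N), ‖nv‖ = 1 →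
      ∀ (Hpl : Set (Euc N)), Hpl = {x | ⟪x - x₀, nv⟫ = 0} →
      -- both pieces T_h^± of the cut simplex have positive measure
      0 < volume {x ∈ Tset | 0 < ⟪x - x₀, nv⟫} →
      0 < volume {x ∈ Tset | ⟪x - x₀, nv⟫ < 0} →
      -- φ ∈ S_h(T), with affine pieces `affEval p` on T_h^+ and `affEval m` on T_h^-
      ∀ (p m : Euc N × ℝ),
        (∀ x ∈ Hpl, affEval p x = affEval m x) →
        βp * ⟪p.1, nv⟫ = βm * ⟪m.1, nv⟫ →
        -- broken gradient: ∇_h φ = p.1 on the plus side, m.1 on the minus side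
        (∫ x in frontier Tset, ‖if 0 < ⟪x - x₀, nv⟫ then p.1 else m.1‖ ^ 2
            ∂(μH[(N : ℝ) - 1])) ≤
          C ^ 2 / Metric.diam Tset *
            ∫ x in Tset, ‖if 0 < ⟪x - x₀, nv⟫ then p.1 else m.1‖ ^ 2 := by
  have hbmp : 0 < βm / βp := div_pos hβm hβp
  have hbpm : 0 < βp / βm := div_pos hβp hβm
  set K := (1 + βm / βp + βp / βm) ^ 2 with hKdef
  have hK1 : 1 ≤ K := by nlinarith
  have hKp : (βm / βp) ^ 2 ≤ K := by nlinarith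
  have hKm : (βp / βm) ^ 2 ≤ K := by nlinarith
  have hσ2 := Statement11Aux.sigma_pos 2
  have hσ3 := Statement11Aux.sigma_pos 3
  have hK0 : 0 < K := lt_of_lt_of_le one_pos hK1
  set W := K * ϱ ^ 2 * 3 / Statement11Aux.sigma 2 + K * ϱ ^ 3 * 16 / Statement11Aux.sigma 3 + 1
    with hWdef
  have ht2 : 0 ≤ K * ϱ ^ 2 * 3 / Statement11Aux.sigma 2 :=
    div_nonneg (by positivity) hσ2.le
  have ht3 : 0 ≤ K * ϱ ^ 3 * 16 / Statement11Aux.sigma 3 :=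
    div_nonneg (by positivity) hσ3.le
  have hW1 : 1 ≤ W := by rw [hWdef]; linarith
  have hW0 : 0 < W := lt_of_lt_of_le one_pos hW1
  refine ⟨Real.sqrt W, Real.sqrt_pos.mpr hW0, ?_⟩
  intro N hN v hv Tset hTs hreg nv x₀ hnv Hpl hHpl hpos hneg p m hcont hflux
  have hC2 : (Real.sqrt W) ^ 2 = W := Real.sq_sqrt hW0.le
  have hcont' : ∀ x, ⟪x - x₀, nv⟫ = 0 → affEval p x = affEval m x := by
    intro x hx
    exact hcont x (by rw [hHpl]; exact hx)
  rcases hN with rfl | rfl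
  · refine Statement11Aux.key 0 ϱ βp βm K (Real.sqrt W) hϱ hβp hβm hK1 hKp hKm ?_
      v hv Tset hTs hreg nv x₀ hnv p m hcont' hflux
    rw [hC2, hWdef]
    norm_num
    linarith
  · refine Statement11Aux.key 1 ϱ βp βm K (Real.sqrt W) hϱ hβp hβm hK1 hKp hKm ?_
      v hv Tset hTs hreg nv x₀ hnv p m hcont' hflux
    rw [hC2, hWdef]
    norm_num
    linarith
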